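/- Let λ > 0, a* := 2/λ, and F a := λ * (a*/a − Real.log (a*/a) − 1). Let T̃⁺ > 1 and 0 < T̃⁻ < 1, and set a⁺ t := 2 * (1 + (T̃⁺ − 1) * Real.exp (−2*λ*t)) / λ and a⁻ t := 2 * (1 + (T̃⁻ − 1) * Real.exp (−2*λ*t)) / λ. If the initial conditions are F-equidistant from equilibrium, i.e. F (a⁺ 0) = F (a⁻ 0), then for all t ≥ 0: F (a⁻ t) ≤ F (a⁺ t). That is, for a single normal mode of a Gaussian chain, warming up is faster than cooling down. -/

import Mathlib

open Real Set

private lemma key_warm_cool (p m : ℝ) (hp : 0 < p) (hm0 : 0 < m) (hm1 : m < 1)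
    (h : (1 + p)⁻¹ + Real.log (1 + p) = (1 - m)⁻¹ + Real.log (1 - m)) :
    ∀ e : ℝ, 0 ≤ e → e ≤ 1 →
      (1 - m * e)⁻¹ + Real.log (1 - m * e) ≤ (1 + p * e)⁻¹ + Real.log (1 + p * e) := by
  set ψ : ℝ → ℝ := fun e => ((1 + p * e)⁻¹ + Real.log (1 + p * e))
      - ((1 - m * e)⁻¹ + Real.log (1 - m * e)) with hψ
  have hpos : ∀ x : ℝ, 0 ≤ x → x ≤ 1 → 0 < 1 + p * x ∧ 0 < 1 - m * x := by
    intro x hx0 hx1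
    constructor
    · nlinarith
    · nlinarith
  have hderiv : ∀ x : ℝ, 0 < 1 + p * x → 0 < 1 - m * x →
      HasDerivAt ψ
        (x * ((p * (1 - m * x) - m * (1 + p * x)) * (p * (1 - m * x) + m * (1 + p * x)))
          / ((1 + p * x) ^ 2 * (1 - m * x) ^ 2)) x := by
    intro x hu hv
    have h1 : HasDerivAt (fun e : ℝ => 1 + p * e) p x := by
      simpa using ((hasDerivAt_id x).const_mul p).const_add 1
    have h2 : HasDerivAt (fun e : ℝ => 1 - m * e) (-m) x := by
      simpa [neg_mul, ← sub_eq_add_neg] using ((hasDerivAt_id x).const_mul (-m)).const_add 1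
    have H : HasDerivAt ψ _ x := ((h1.inv hu.ne').add (h1.log hu.ne')).sub ((h2.inv hv.ne').add (h2.log hv.ne'))
    convert H using 1
    rw [div_add_div _ _ (by positivity) hu.ne', div_add_div _ _ (by positivity) hv.ne', div_sub_div _ _ (by positivity) (by positivity), div_eq_div_iff (by positivity) (by positivity)]
    ring
  have hψ0 : ψ 0 = 0 := by simp [hψ]
  have hψ1 : ψ 1 = 0 := by
    simp only [hψ, mul_one]
    linarith [h]
  intro e he0 he1
  have key : 0 ≤ ψ e := by
    by_cases hc : 0 ≤ p - m - 2 * p * m * e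
    · -- ψ monotone on [0, e]
      have hmono : MonotoneOn ψ (Icc 0 e) := by
        apply monotoneOn_of_deriv_nonneg (convex_Icc 0 e)
        · intro x hx
          obtain ⟨hu, hv⟩ := hpos x hx.1 (le_trans hx.2 he1)
          exact (hderiv x hu hv).continuousAt.continuousWithinAt
        · intro x hx
          rw [interior_Icc] at hx
          obtain ⟨hu, hv⟩ := hpos x hx.1.le (le_trans hx.2.le he1)
          exact (hderiv x hu hv).differentiableAt.differentiableWithinAt
        · intro x hx
          rw [interior_Icc] at hx
          obtain ⟨hu, hv⟩ := hpos x hx.1.le (le_trans hx.2.le he1)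
          rw [(hderiv x hu hv).deriv]
          apply div_nonneg _ (by positivity)
          apply mul_nonneg hx.1.le
          apply mul_nonneg
          · nlinarith [mul_nonneg (mul_pos hp hm0).le (sub_nonneg.mpr hx.2.le)]
          · nlinarith [mul_pos hp hm0]
      have := hmono (left_mem_Icc.mpr he0) (right_mem_Icc.mpr he0) he0
      linarith [hψ0]
    · -- ψ antitone on [e, 1]
      push_neg at hc
      have hanti : AntitoneOn ψ (Icc e 1) := by
        apply antitoneOn_of_deriv_nonpos (convex_Icc e 1)
        · intro x hx
          obtain ⟨hu, hv⟩ := hpos x (le_trans he0 hx.1) hx.2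
          exact (hderiv x hu hv).continuousAt.continuousWithinAt
        · intro x hx
          rw [interior_Icc] at hx
          obtain ⟨hu, hv⟩ := hpos x (le_trans he0 hx.1.le) hx.2.le
          exact (hderiv x hu hv).differentiableAt.differentiableWithinAt
        · intro x hx
          rw [interior_Icc] at hx
          obtain ⟨hu, hv⟩ := hpos x (le_trans he0 hx.1.le) hx.2.le
          rw [(hderiv x hu hv).deriv]
          apply div_nonpos_of_nonpos_of_nonneg _ (by positivity)
          apply mul_nonpos_of_nonneg_of_nonpos (le_trans he0 hx.1.le)
          apply mul_nonpos_of_nonpos_of_nonneg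
          · nlinarith [mul_nonneg (mul_pos hp hm0).le (sub_nonneg.mpr hx.1.le)]
          · nlinarith [mul_pos hp hm0]
      have := hanti (left_mem_Icc.mpr he1) (right_mem_Icc.mpr he1) he1
      linarith [hψ1]
  simpa [hψ, sub_nonneg] using key

theorem warming_faster_than_cooling_single_mode
    (lam : ℝ) (hlam : 0 < lam)
    (F : ℝ → ℝ)
    (hF : ∀ x : ℝ, F x = lam * ((2 / lam) / x - Real.log ((2 / lam) / x) - 1))
    (Tp Tm : ℝ) (hTp : 1 < Tp) (hTm0 : 0 < Tm) (hTm1 : Tm < 1)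
    (ap am : ℝ → ℝ)
    (hap : ∀ t : ℝ, ap t = 2 * (1 + (Tp - 1) * Real.exp (-2 * lam * t)) / lam)
    (ham : ∀ t : ℝ, am t = 2 * (1 + (Tm - 1) * Real.exp (-2 * lam * t)) / lam)
    (heq : F (ap 0) = F (am 0)) :
    ∀ t : ℝ, 0 ≤ t → F (am t) ≤ F (ap t) := by
  have Fval : ∀ u : ℝ, 0 < u → F (2 * u / lam) = lam * (u⁻¹ + Real.log u - 1) := by
    intro u hu
    rw [hF]
    have h1 : (2 / lam) / (2 * u / lam) = u⁻¹ := by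
      field_simp
    rw [h1, Real.log_inv]
    ring
  set p := Tp - 1 with hpdef
  set m := 1 - Tm with hmdef
  have hp : 0 < p := by simp [hpdef]; linarith
  have hm0 : 0 < m := by simp [hmdef]; linarith
  have hm1 : m < 1 := by simp [hmdef]; linarith
  have hinit : (1 + p)⁻¹ + Real.log (1 + p) = (1 - m)⁻¹ + Real.log (1 - m) := by
    have e0 : Real.exp (-2 * lam * 0) = 1 := by norm_num
    have h1 : F (ap 0) = lam * ((1 + p)⁻¹ + Real.log (1 + p) - 1) := by
      rw [hap, e0]
      rw [show 2 * (1 + (Tp - 1) * 1) / lam = 2 * (1 + p) / lam by rw [hpdef]; ring]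
      exact Fval _ (by linarith)
    have h2 : F (am 0) = lam * ((1 - m)⁻¹ + Real.log (1 - m) - 1) := by
      rw [ham, e0]
      rw [show 2 * (1 + (Tm - 1) * 1) / lam = 2 * (1 - m) / lam by rw [hmdef]; ring]
      exact Fval _ (by linarith)
    rw [h1, h2] at heq
    have := mul_left_cancel₀ hlam.ne' heq
    linarith
  intro t ht
  set e := Real.exp (-2 * lam * t) with hedef
  have he0 : 0 < e := Real.exp_pos _
  have he1 : e ≤ 1 := by
    rw [hedef]
    apply Real.exp_le_one_iff.mpr
    nlinarith
  have hkey := key_warm_cool p m hp hm0 hm1 hinit e he0.le he1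
  have hup : (0:ℝ) < 1 + p * e := by nlinarith
  have hvp : (0:ℝ) < 1 - m * e := by nlinarith
  have h1 : F (ap t) = lam * ((1 + p * e)⁻¹ + Real.log (1 + p * e) - 1) := by
    rw [hap]
    rw [show 2 * (1 + (Tp - 1) * e) / lam = 2 * (1 + p * e) / lam by rw [hpdef]]
    exact Fval _ hup
  have h2 : F (am t) = lam * ((1 - m * e)⁻¹ + Real.log (1 - m * e) - 1) := by
    rw [ham]
    rw [show 2 * (1 + (Tm - 1) * e) / lam = 2 * (1 - m * e) / lam by rw [hmdef]; ring_nf]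
    exact Fval _ hvp
  rw [h1, h2]
  have : (1 - m * e)⁻¹ + Real.log (1 - m * e) - 1 ≤ (1 + p * e)⁻¹ + Real.log (1 + p * e) - 1 := by
    linarith
  exact mul_le_mul_of_nonneg_left this hlam.le
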